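/- arXiv:2002.12453 — 6 statements merged into one kernel-verified Lean document; each statement's English description precedes it below -/
import Mathlib

section
/- Let I be an ideal of a CL-algebra L, and define the relation ρ on L by x ρ y if and only if x * ∼y ∈ I and y * ∼x ∈ I, where ∼x denotes x → 0. Then ρ is an equivalence relation on L, i.e., ρ is reflexive, symmetric, and transitive. -/
/-- A CL-algebra: a lattice with least element `⊥`, a commutative monoid structure,
a residuated implication `⇨` and an involutive negation `∼x := x ⇨ 0`. -/
class CLAlgebra (L : Type*) extends Lattice L, OrderBot L, CommMonoid L, Zero L, HImp L where
  residuation : ∀ x y z : L, x * y ≤ z ↔ x ≤ y ⇨ z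
  involution : ∀ x : L, ((x ⇨ (0 : L)) ⇨ (0 : L)) = x

theorem ideal_rel_equivalence {L : Type*} [CLAlgebra L] (I : Set L)
    -- `I` is an ideal of the CL-algebra `L`:
    (h0 : (0 : L) ∈ I)
    (hadd : ∀ x y : L, x ∈ I → y ∈ I → (((x ⇨ (0 : L)) * (y ⇨ (0 : L))) ⇨ (0 : L)) ∈ I)
    (hsup : ∀ x y : L, x ∈ I → y ∈ I → x ⊔ y ∈ I)
    (hdown : ∀ x y : L, y ∈ I → x ≤ y → x ∈ I) :
    Equivalence (fun x y : L => x * (y ⇨ (0 : L)) ∈ I ∧ y * (x ⇨ (0 : L)) ∈ I) := by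
  have res := CLAlgebra.residuation (L := L)
  -- a * (a ⇨ c) ≤ c
  have mp : ∀ a c : L, a * (a ⇨ c) ≤ c := by
    intro a c
    have : (a ⇨ c) * a ≤ c := (res _ _ _).mpr le_rfl
    rwa [mul_comm] at this
  -- monotonicity of multiplication
  have mono : ∀ a b c : L, a ≤ b → a * c ≤ b * c := by
    intro a b c hab
    have h1 : b ≤ c ⇨ (b * c) := (res _ _ _).mp le_rfl
    exact (res _ _ _).mpr (hab.trans h1)
  have refl : ∀ x : L, x * (x ⇨ (0 : L)) ∈ I := fun x => hdown _ _ h0 (mp x 0)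
  refine ⟨fun x => ⟨refl x, refl x⟩, fun h => ⟨h.2, h.1⟩, ?_⟩
  rintro x y z ⟨hxy, hyx⟩ ⟨hyz, hzy⟩
  have key : ∀ a b c : L, a * (b ⇨ (0:L)) ∈ I → b * (c ⇨ (0:L)) ∈ I →
      a * (c ⇨ (0:L)) ∈ I := by
    intro a b c hab hbc
    set u := a * (b ⇨ (0:L)) with hu
    set v := b * (c ⇨ (0:L)) with hv
    -- a * ∼c ≤ ∼(∼u * ∼v)
    have h1 : a * (u ⇨ (0:L)) ≤ b := by
      have : a * (u ⇨ (0:L)) * (b ⇨ (0:L)) ≤ 0 := by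
        have : u * (u ⇨ (0:L)) ≤ 0 := mp u 0
        calc a * (u ⇨ (0:L)) * (b ⇨ (0:L)) = u * (u ⇨ (0:L)) := by
              rw [hu]; ac_rfl
          _ ≤ 0 := this
      have := (res _ _ _).mp this
      rwa [CLAlgebra.involution] at this
    have h2 : b * (v ⇨ (0:L)) ≤ (c ⇨ (0:L)) ⇨ (0:L) := by
      refine (res _ _ _).mp ?_
      calc b * (v ⇨ (0:L)) * (c ⇨ (0:L)) = v * (v ⇨ (0:L)) := by rw [hv]; ac_rfl
        _ ≤ 0 := mp v 0
    have h3 : a * (c ⇨ (0:L)) * ((u ⇨ (0:L)) * (v ⇨ (0:L))) ≤ 0 := by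
      calc a * (c ⇨ (0:L)) * ((u ⇨ (0:L)) * (v ⇨ (0:L)))
          = a * (u ⇨ (0:L)) * (v ⇨ (0:L)) * (c ⇨ (0:L)) := by ac_rfl
        _ ≤ b * (v ⇨ (0:L)) * (c ⇨ (0:L)) := mono _ _ _ (mono _ _ _ h1)
        _ ≤ (((c ⇨ (0:L)) ⇨ (0:L)) * (c ⇨ (0:L))) := mono _ _ _ h2
        _ ≤ 0 := by rw [mul_comm]; exact mp _ 0
    have h4 : a * (c ⇨ (0:L)) ≤ ((u ⇨ (0:L)) * (v ⇨ (0:L))) ⇨ (0:L) :=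
      (res _ _ _).mp h3
    exact hdown _ _ (hadd u v hab hbc) h4
  exact ⟨key x y z hxy hyz, key z y x hzy hyx⟩
end

section
/- Let I be an ideal of a CL-algebra L, and define the relation ρ on L by x ρ y if and only if x * ∼y ∈ I and y * ∼x ∈ I, where ∼x denotes x → 0. Then ρ is compatible with the meet operation: if x ρ x₁ and y ρ y₁, then (x ⊓ y) ρ (x₁ ⊓ y₁). -/
namespace CLAux

variable {L : Type*} [CLAlgebra L]

lemma mul_mono_left {a b : L} (c : L) (h : a ≤ b) : a * c ≤ b * c :=
  (CLAlgebra.residuation a c (b * c)).mpr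
    (h.trans ((CLAlgebra.residuation b c (b * c)).mp le_rfl))

lemma mul_mono_right (a : L) {c d : L} (h : c ≤ d) : a * c ≤ a * d := by
  rw [mul_comm a c, mul_comm a d]; exact mul_mono_left a h

lemma mul_neg_le (a : L) : (a ⇨ (0 : L)) * a ≤ 0 :=
  (CLAlgebra.residuation _ _ _).mpr le_rfl

lemma neg_anti {a b : L} (h : a ≤ b) : b ⇨ (0 : L) ≤ a ⇨ (0 : L) :=
  (CLAlgebra.residuation _ _ _).mp
    (le_trans (mul_mono_right _ h) (mul_neg_le b))

lemma neg_inf_le (a b : L) :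
    (a ⊓ b) ⇨ (0 : L) ≤ (a ⇨ (0 : L)) ⊔ (b ⇨ (0 : L)) := by
  set s := (a ⇨ (0 : L)) ⊔ (b ⇨ (0 : L)) with hs
  have h1 : (s ⇨ (0 : L)) ≤ a := by
    have := neg_anti (le_sup_left : a ⇨ (0:L) ≤ s)
    rwa [CLAlgebra.involution] at this
  have h2 : (s ⇨ (0 : L)) ≤ b := by
    have := neg_anti (le_sup_right : b ⇨ (0:L) ≤ s)
    rwa [CLAlgebra.involution] at this
  have h3 : (s ⇨ (0 : L)) ≤ a ⊓ b := le_inf h1 h2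
  have := neg_anti h3
  rwa [CLAlgebra.involution] at this

lemma key {a b a₁ b₁ : L} :
    (a ⊓ b) * ((a₁ ⊓ b₁) ⇨ (0 : L)) ≤ a * (a₁ ⇨ (0 : L)) ⊔ b * (b₁ ⇨ (0 : L)) := by
  refine le_trans (mul_mono_right _ (neg_inf_le a₁ b₁)) ?_
  rw [mul_comm]
  refine (CLAlgebra.residuation _ _ _).mpr (sup_le ?_ ?_)
  · exact (CLAlgebra.residuation _ _ _).mp <| by
      calc (a₁ ⇨ (0:L)) * (a ⊓ b) ≤ (a₁ ⇨ (0:L)) * a := mul_mono_right _ inf_le_left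
        _ = a * (a₁ ⇨ (0:L)) := mul_comm _ _
        _ ≤ _ := le_sup_left
  · exact (CLAlgebra.residuation _ _ _).mp <| by
      calc (b₁ ⇨ (0:L)) * (a ⊓ b) ≤ (b₁ ⇨ (0:L)) * b := mul_mono_right _ inf_le_right
        _ = b * (b₁ ⇨ (0:L)) := mul_comm _ _
        _ ≤ _ := le_sup_right

end CLAux

theorem ideal_rel_inf_compat {L : Type*} [CLAlgebra L] (I : Set L)
    -- `I` is an ideal of the CL-algebra `L`:
    (h0 : (0 : L) ∈ I)
    (hadd : ∀ x y : L, x ∈ I → y ∈ I → (((x ⇨ (0 : L)) * (y ⇨ (0 : L))) ⇨ (0 : L)) ∈ I)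
    (hsup : ∀ x y : L, x ∈ I → y ∈ I → x ⊔ y ∈ I)
    (hdown : ∀ x y : L, y ∈ I → x ≤ y → x ∈ I)
    {x x₁ y y₁ : L}
    (hx : x * (x₁ ⇨ (0 : L)) ∈ I ∧ x₁ * (x ⇨ (0 : L)) ∈ I)
    (hy : y * (y₁ ⇨ (0 : L)) ∈ I ∧ y₁ * (y ⇨ (0 : L)) ∈ I) :
    (x ⊓ y) * ((x₁ ⊓ y₁) ⇨ (0 : L)) ∈ I ∧ (x₁ ⊓ y₁) * ((x ⊓ y) ⇨ (0 : L)) ∈ I := by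
  constructor
  · exact hdown _ _ (hsup _ _ hx.1 hy.1) CLAux.key
  · exact hdown _ _ (hsup _ _ hx.2 hy.2) CLAux.key
end

section
/- Let I be an ideal of a CL-algebra L, and define the relation ρ on L by x ρ y if and only if x * ∼y ∈ I and y * ∼x ∈ I, where ∼x denotes x → 0. Then ρ is compatible with the monoid multiplication: if x ρ x₁ and y ρ y₁, then (x * y) ρ (x₁ * y₁). -/
section Aux
variable {L : Type*} [CLAlgebra L]

private lemma CL.res (x y z : L) : x * y ≤ z ↔ x ≤ y ⇨ z := CLAlgebra.residuation x y z

private lemma CL.mul_le_mul_right' {x y : L} (h : x ≤ y) (w : L) : x * w ≤ y * w :=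
  (CL.res x w (y * w)).2 (h.trans ((CL.res y w (y * w)).1 le_rfl))

private lemma CL.mul_neg_le (x : L) : x * (x ⇨ (0 : L)) ≤ 0 :=
  (CL.res x (x ⇨ (0 : L)) 0).2 (le_of_eq (CLAlgebra.involution x).symm)

private lemma CL.key (x x₁ : L) : x * ((x * (x₁ ⇨ (0 : L))) ⇨ (0 : L)) ≤ x₁ := by
  have h2 : (x * ((x * (x₁ ⇨ (0 : L))) ⇨ (0 : L))) * (x₁ ⇨ (0 : L)) ≤ (0 : L) := by
    rw [mul_right_comm]
    exact CL.mul_neg_le _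
  have := (CL.res _ _ _).1 h2
  rwa [CLAlgebra.involution] at this

private lemma CL.main {I : Set L}
    (hadd : ∀ x y : L, x ∈ I → y ∈ I → (((x ⇨ (0 : L)) * (y ⇨ (0 : L))) ⇨ (0 : L)) ∈ I)
    (hdown : ∀ x y : L, y ∈ I → x ≤ y → x ∈ I)
    {x x₁ y y₁ : L} (ha : x * (x₁ ⇨ (0 : L)) ∈ I) (hb : y * (y₁ ⇨ (0 : L)) ∈ I) :
    (x * y) * ((x₁ * y₁) ⇨ (0 : L)) ∈ I := by
  set a := x * (x₁ ⇨ (0 : L)) with hadef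
  set b := y * (y₁ ⇨ (0 : L)) with hbdef
  refine hdown _ _ (hadd a b ha hb) ?_
  rw [← CL.res]
  have h1 : (x * (a ⇨ (0 : L))) * (y * (b ⇨ (0 : L))) ≤ x₁ * y₁ := by
    calc (x * (a ⇨ (0 : L))) * (y * (b ⇨ (0 : L)))
        ≤ x₁ * (y * (b ⇨ (0 : L))) := CL.mul_le_mul_right' (CL.key x x₁) _
      _ = (y * (b ⇨ (0 : L))) * x₁ := mul_comm _ _
      _ ≤ y₁ * x₁ := CL.mul_le_mul_right' (CL.key y y₁) _
      _ = x₁ * y₁ := mul_comm _ _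
  have h2 : (x * (a ⇨ (0 : L))) * (y * (b ⇨ (0 : L))) * ((x₁ * y₁) ⇨ (0 : L)) ≤ (0 : L) :=
    le_trans (CL.mul_le_mul_right' h1 _) (CL.mul_neg_le _)
  have heq : x * y * ((x₁ * y₁) ⇨ (0 : L)) * ((a ⇨ (0 : L)) * (b ⇨ (0 : L)))
      = (x * (a ⇨ (0 : L))) * (y * (b ⇨ (0 : L))) * ((x₁ * y₁) ⇨ (0 : L)) := by
    ac_rfl
  rw [heq]
  exact h2

end Aux

theorem ideal_rel_mul_compat {L : Type*} [CLAlgebra L] (I : Set L)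
    -- `I` is an ideal of the CL-algebra `L`:
    (h0 : (0 : L) ∈ I)
    (hadd : ∀ x y : L, x ∈ I → y ∈ I → (((x ⇨ (0 : L)) * (y ⇨ (0 : L))) ⇨ (0 : L)) ∈ I)
    (hsup : ∀ x y : L, x ∈ I → y ∈ I → x ⊔ y ∈ I)
    (hdown : ∀ x y : L, y ∈ I → x ≤ y → x ∈ I)
    {x x₁ y y₁ : L}
    (hx : x * (x₁ ⇨ (0 : L)) ∈ I ∧ x₁ * (x ⇨ (0 : L)) ∈ I)
    (hy : y * (y₁ ⇨ (0 : L)) ∈ I ∧ y₁ * (y ⇨ (0 : L)) ∈ I) :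
    (x * y) * ((x₁ * y₁) ⇨ (0 : L)) ∈ I ∧ (x₁ * y₁) * ((x * y) ⇨ (0 : L)) ∈ I :=
  ⟨CL.main hadd hdown hx.1 hy.1, CL.main hadd hdown hx.2 hy.2⟩
end

section
/- Let I be an ideal of a CL-algebra L, and define the relation ρ on L by x ρ y if and only if x * ∼y ∈ I and y * ∼x ∈ I, where ∼x denotes x → 0. Then for all x, y in L: x ρ (x ⊓ y) if and only if ∼(x → y) ∈ I. (Equivalently, the congruence class of x is below the congruence class of y in the quotient order if and only if ∼(x → y) ∈ I.) -/
namespace CLAlgebraAux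

variable {L : Type*} [CLAlgebra L]

local notation "∼" a => a ⇨ (0 : L)

lemma neg_mul_self_le (a : L) : (∼a) * a ≤ 0 :=
  (CLAlgebra.residuation _ _ _).mpr le_rfl

lemma mul_neg_self_le (a : L) : a * (∼a) ≤ 0 := by
  rw [mul_comm]; exact neg_mul_self_le a

lemma cl_mul_le {a b : L} (h : a ≤ b) (c : L) : c * a ≤ c * b := by
  rw [mul_comm c a, mul_comm c b]
  exact (CLAlgebra.residuation _ _ _).mpr
    (h.trans ((CLAlgebra.residuation b c (b * c)).mp le_rfl))

lemma neg_antitone {a b : L} (h : a ≤ b) : (∼b) ≤ ∼a := by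
  have h2 : ((∼b) : L) * a ≤ 0 := (cl_mul_le h (∼b)).trans (neg_mul_self_le b)
  exact (CLAlgebra.residuation _ _ _).mp h2

lemma himp_neg (a b : L) : (a ⇨ (∼b)) = ∼(a * b) := by
  apply le_antisymm
  · have h1 : (a ⇨ (∼b)) * a ≤ ∼b := (CLAlgebra.residuation (a ⇨ (∼b)) a (∼b)).mpr le_rfl
    have h3 : (a ⇨ (∼b)) * (a * b) ≤ 0 :=
      calc (a ⇨ (∼b)) * (a * b) = ((a ⇨ (∼b)) * a) * b := by rw [mul_assoc]
        _ ≤ (∼b) * b := by rw [mul_comm _ b, mul_comm _ b]; exact cl_mul_le h1 b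
        _ ≤ 0 := neg_mul_self_le b
    exact (CLAlgebra.residuation _ _ _).mp h3
  · have h2 : ((∼(a * b)) : L) * a * b ≤ 0 := by
      rw [mul_assoc]; exact neg_mul_self_le (a * b)
    exact (CLAlgebra.residuation _ _ _).mp ((CLAlgebra.residuation _ _ _).mp h2)

lemma neg_himp (a b : L) : (∼(a ⇨ b)) = a * (∼b) := by
  conv_lhs => rw [← CLAlgebra.involution b]
  rw [himp_neg, CLAlgebra.involution]

lemma mul_sup_le (a b c : L) : a * (b ⊔ c) ≤ (a * b) ⊔ (a * c) := by
  rw [mul_comm]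
  refine (CLAlgebra.residuation _ _ _).mpr (sup_le ?_ ?_)
  · exact (CLAlgebra.residuation _ _ _).mp (le_sup_left.trans_eq' (mul_comm a b))
  · exact (CLAlgebra.residuation _ _ _).mp (le_sup_right.trans_eq' (mul_comm a c))

lemma neg_inf_le (a b : L) : (∼(a ⊓ b)) ≤ (∼a) ⊔ (∼b) := by
  have h : (∼((∼a) ⊔ (∼b))) ≤ a ⊓ b := by
    refine le_inf ?_ ?_
    · have := neg_antitone (le_sup_left : (∼a) ≤ (∼a) ⊔ (∼b))
      rwa [CLAlgebra.involution] at this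
    · have := neg_antitone (le_sup_right : (∼b) ≤ (∼a) ⊔ (∼b))
      rwa [CLAlgebra.involution] at this
  have := neg_antitone h
  rwa [CLAlgebra.involution] at this

end CLAlgebraAux

open CLAlgebraAux in
theorem ideal_rel_le_iff {L : Type*} [CLAlgebra L] (I : Set L)
    -- `I` is an ideal of the CL-algebra `L`:
    (h0 : (0 : L) ∈ I)
    (hadd : ∀ x y : L, x ∈ I → y ∈ I → (((x ⇨ (0 : L)) * (y ⇨ (0 : L))) ⇨ (0 : L)) ∈ I)
    (hsup : ∀ x y : L, x ∈ I → y ∈ I → x ⊔ y ∈ I)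
    (hdown : ∀ x y : L, y ∈ I → x ≤ y → x ∈ I)
    (x y : L) :
    (x * ((x ⊓ y) ⇨ (0 : L)) ∈ I ∧ (x ⊓ y) * (x ⇨ (0 : L)) ∈ I) ↔
      ((x ⇨ y) ⇨ (0 : L)) ∈ I := by
  rw [neg_himp]
  constructor
  · rintro ⟨h1, -⟩
    refine hdown _ _ h1 ?_
    have : (y ⇨ (0 : L)) ≤ (x ⊓ y) ⇨ (0 : L) := neg_antitone inf_le_right
    exact cl_mul_le this x
  · intro h
    constructor
    · have hle : x * ((x ⊓ y) ⇨ (0 : L)) ≤ (0 : L) ⊔ (x * (y ⇨ (0 : L))) := by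
        calc x * ((x ⊓ y) ⇨ (0 : L))
            ≤ x * ((x ⇨ (0 : L)) ⊔ (y ⇨ (0 : L))) := cl_mul_le (neg_inf_le x y) x
          _ ≤ (x * (x ⇨ (0 : L))) ⊔ (x * (y ⇨ (0 : L))) := mul_sup_le _ _ _
          _ ≤ (0 : L) ⊔ (x * (y ⇨ (0 : L))) := sup_le_sup_right (mul_neg_self_le x) _
      exact hdown _ _ (hsup _ _ h0 h) hle
    · refine hdown _ _ h0 ?_
      rw [mul_comm]
      exact (cl_mul_le inf_le_left _).trans (neg_mul_self_le x)
end

section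
/- Let I be a prime ideal of a CL-algebra L, and define the relation ρ on L by x ρ y if and only if x * ∼y ∈ I and y * ∼x ∈ I, where ∼x denotes x → 0. Then for all x, y in L, either x ρ (x ⊓ y) or y ρ (x ⊓ y); that is, the quotient L/I is linearly ordered. -/
theorem prime_ideal_quotient_linear {L : Type*} [CLAlgebra L] (I : Set L)
    -- `I` is an ideal of the CL-algebra `L`:
    (h0 : (0 : L) ∈ I)
    (hadd : ∀ x y : L, x ∈ I → y ∈ I → (((x ⇨ (0 : L)) * (y ⇨ (0 : L))) ⇨ (0 : L)) ∈ I)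
    (hsup : ∀ x y : L, x ∈ I → y ∈ I → x ⊔ y ∈ I)
    (hdown : ∀ x y : L, y ∈ I → x ≤ y → x ∈ I)
    (hprime : ∀ x y : L, ((x ⇨ y) ⇨ (0 : L)) ∈ I ∨ ((y ⇨ x) ⇨ (0 : L)) ∈ I)
    (x y : L) :
    (x * ((x ⊓ y) ⇨ (0 : L)) ∈ I ∧ (x ⊓ y) * (x ⇨ (0 : L)) ∈ I) ∨
      (y * ((x ⊓ y) ⇨ (0 : L)) ∈ I ∧ (x ⊓ y) * (y ⇨ (0 : L)) ∈ I) := by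
  have r := CLAlgebra.residuation (L := L)
  have inv := CLAlgebra.involution (L := L)
  -- multiplication is monotone
  have mono : ∀ a b c : L, a ≤ b → a * c ≤ b * c := by
    intro a b c h
    exact (r a c (b * c)).mpr (le_trans h ((r b c (b * c)).mp le_rfl))
  -- a * ∼a ≤ 0
  have negx : ∀ a : L, a * (a ⇨ (0 : L)) ≤ 0 := by
    intro a
    calc a * (a ⇨ (0 : L)) = (a ⇨ (0 : L)) * a := mul_comm _ _
      _ ≤ 0 := (r _ _ _).mpr le_rfl
  -- negation is antitone
  have anti : ∀ a b : L, a ≤ b → (b ⇨ (0 : L)) ≤ (a ⇨ (0 : L)) := by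
    intro a b h
    refine (r _ _ _).mp ?_
    calc (b ⇨ (0 : L)) * a = a * (b ⇨ (0 : L)) := mul_comm _ _
      _ ≤ b * (b ⇨ (0 : L)) := mono _ _ _ h
      _ ≤ 0 := negx b
  -- ∼(a ⊓ b) ≤ ∼a ⊔ ∼b
  have hinf : ∀ a b : L, ((a ⊓ b) ⇨ (0 : L)) ≤ (a ⇨ (0 : L)) ⊔ (b ⇨ (0 : L)) := by
    intro a b
    have h1 : (((a ⇨ (0 : L)) ⊔ (b ⇨ (0 : L))) ⇨ (0 : L)) ≤ a := by
      have := anti (a ⇨ (0 : L)) ((a ⇨ (0 : L)) ⊔ (b ⇨ (0 : L))) le_sup_left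
      rwa [inv a] at this
    have h2 : (((a ⇨ (0 : L)) ⊔ (b ⇨ (0 : L))) ⇨ (0 : L)) ≤ b := by
      have := anti (b ⇨ (0 : L)) ((a ⇨ (0 : L)) ⊔ (b ⇨ (0 : L))) le_sup_right
      rwa [inv b] at this
    have h3 := anti _ _ (le_inf h1 h2)
    rwa [inv ((a ⇨ (0 : L)) ⊔ (b ⇨ (0 : L)))] at h3
  -- a * (b ⊔ c) ≤ (a * b) ⊔ (a * c)
  have hdist : ∀ a b c : L, a * (b ⊔ c) ≤ (a * b) ⊔ (a * c) := by
    intro a b c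
    have hb : b ≤ a ⇨ ((a * b) ⊔ (a * c)) :=
      (r b a _).mp (le_trans (le_of_eq (mul_comm b a)) le_sup_left)
    have hc : c ≤ a ⇨ ((a * b) ⊔ (a * c)) :=
      (r c a _).mp (le_trans (le_of_eq (mul_comm c a)) le_sup_right)
    calc a * (b ⊔ c) = (b ⊔ c) * a := mul_comm _ _
      _ ≤ (a * b) ⊔ (a * c) := (r _ _ _).mpr (sup_le hb hc)
  -- a * ∼b ≤ ∼(a ⇨ b)
  have key : ∀ a b : L, a * (b ⇨ (0 : L)) ≤ ((a ⇨ b) ⇨ (0 : L)) := by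
    intro a b
    refine (r _ _ _).mp ?_
    -- need (a * ∼b) * (a ⇨ b) ≤ 0
    have h1 : (a ⇨ b) * a ≤ b := (r _ _ _).mpr le_rfl
    have h2 : a * (a ⇨ b) ≤ ((b ⇨ (0 : L)) ⇨ (0 : L)) := by
      rw [inv b]; exact le_trans (le_of_eq (mul_comm _ _)) h1
    have h3 : (a * (a ⇨ b)) * (b ⇨ (0 : L)) ≤ 0 := (r _ _ _).mpr h2
    calc (a * (b ⇨ (0 : L))) * (a ⇨ b) = (a * (a ⇨ b)) * (b ⇨ (0 : L)) := by
          rw [mul_assoc, mul_assoc, mul_comm (b ⇨ (0 : L))]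
      _ ≤ 0 := h3
  -- main lemma
  have main : ∀ a b : L, ((a ⇨ b) ⇨ (0 : L)) ∈ I →
      a * ((a ⊓ b) ⇨ (0 : L)) ∈ I ∧ (a ⊓ b) * (a ⇨ (0 : L)) ∈ I := by
    intro a b hI
    constructor
    · have h1 : a * ((a ⊓ b) ⇨ (0 : L)) ≤ (0 : L) ⊔ ((a ⇨ b) ⇨ (0 : L)) := by
        calc a * ((a ⊓ b) ⇨ (0 : L))
            ≤ a * ((a ⇨ (0 : L)) ⊔ (b ⇨ (0 : L))) := by
              have := mono _ _ a (hinf a b)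
              calc a * ((a ⊓ b) ⇨ (0 : L)) = ((a ⊓ b) ⇨ (0 : L)) * a := mul_comm _ _
                _ ≤ ((a ⇨ (0 : L)) ⊔ (b ⇨ (0 : L))) * a := this
                _ = a * ((a ⇨ (0 : L)) ⊔ (b ⇨ (0 : L))) := mul_comm _ _
          _ ≤ (a * (a ⇨ (0 : L))) ⊔ (a * (b ⇨ (0 : L))) := hdist _ _ _
          _ ≤ (0 : L) ⊔ ((a ⇨ b) ⇨ (0 : L)) := sup_le_sup (negx a) (key a b)
      exact hdown _ _ (hsup _ _ h0 hI) h1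
    · refine hdown _ _ h0 ?_
      calc (a ⊓ b) * (a ⇨ (0 : L)) ≤ a * (a ⇨ (0 : L)) := mono _ _ _ inf_le_left
        _ ≤ 0 := negx a
  rcases hprime x y with h | h
  · exact Or.inl (main x y h)
  · have := main y x h
    rw [inf_comm y x] at this
    exact Or.inr this
end

section
/- Let L be a CL-algebra in which every element is idempotent, i.e., x * x = x for all x in L, and let I be an ideal of L. Then I is an implicative ideal: for all x, y, z in L, if ∼(x → (y → z)) ∈ I and ∼(x → y) ∈ I, then ∼(x → z) ∈ I, where ∼x denotes x → 0. -/
section Aux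
variable {L : Type*} [CLAlgebra L]

private lemma cl_himp_mul_le (a w : L) : (a ⇨ w) * a ≤ w :=
  (CLAlgebra.residuation _ _ _).2 le_rfl

private lemma cl_himp_anti {a b : L} (w : L) (h : a ≤ b) : (b ⇨ w) ≤ (a ⇨ w) := by
  have hb : b ≤ (b ⇨ w) ⇨ w :=
    (CLAlgebra.residuation _ _ _).1 (by rw [mul_comm]; exact cl_himp_mul_le b w)
  rw [← CLAlgebra.residuation, mul_comm]
  exact (CLAlgebra.residuation _ _ _).2 (le_trans h hb)

private lemma cl_mul_le_mul_left {a b : L} (c : L) (h : a ≤ b) : c * a ≤ c * b := by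
  rw [CLAlgebra.residuation]
  exact le_trans ((CLAlgebra.residuation c b (c * b)).1 le_rfl) (cl_himp_anti _ h)

private lemma cl_mul_le_mul {a b c d : L} (h1 : a ≤ b) (h2 : c ≤ d) : a * c ≤ b * d :=
  le_trans (cl_mul_le_mul_left a h2) (by rw [mul_comm a d, mul_comm b d]; exact cl_mul_le_mul_left d h1)

end Aux

theorem ideal_implicative_of_idem {L : Type*} [CLAlgebra L]
    (hidem : ∀ x : L, x * x = x) (I : Set L)
    -- `I` is an ideal of the CL-algebra `L`:
    (h0 : (0 : L) ∈ I)
    (hadd : ∀ x y : L, x ∈ I → y ∈ I → (((x ⇨ (0 : L)) * (y ⇨ (0 : L))) ⇨ (0 : L)) ∈ I)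
    (hsup : ∀ x y : L, x ∈ I → y ∈ I → x ⊔ y ∈ I)
    (hdown : ∀ x y : L, y ∈ I → x ≤ y → x ∈ I)
    (x y z : L)
    (h1 : ((x ⇨ (y ⇨ z)) ⇨ (0 : L)) ∈ I)
    (h2 : ((x ⇨ y) ⇨ (0 : L)) ∈ I) :
    ((x ⇨ z) ⇨ (0 : L)) ∈ I := by
  have hmem := hadd _ _ h1 h2
  simp only [CLAlgebra.involution] at hmem
  -- key: (x⇨(y⇨z)) * (x⇨y) ≤ x ⇨ z
  have key : (x ⇨ (y ⇨ z)) * (x ⇨ y) ≤ x ⇨ z := by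
    rw [← CLAlgebra.residuation]
    have e : ((x ⇨ (y ⇨ z)) * (x ⇨ y)) * x = ((x ⇨ (y ⇨ z)) * x) * ((x ⇨ y) * x) := by
      conv_rhs => rw [← mul_mul_mul_comm, hidem x]
    rw [e]
    exact le_trans (cl_mul_le_mul (cl_himp_mul_le _ _) (cl_himp_mul_le _ _)) (cl_himp_mul_le y z)
  exact hdown _ _ hmem (cl_himp_anti _ key)
end
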